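/- In the polynomial ring ℂ[x, y, z], the family consisting of the polynomials x^a z^b (xy − z)^c for all (a,b,c) ∈ ℕ³, together with the polynomials y^{a+1} z^b (xy − z)^c for all (a,b,c) ∈ ℕ³, is a basis of ℂ[x, y, z] as a ℂ-vector space; that is, the indexed family over the disjoint union ℕ³ ⊔ ℕ³ is linearly independent and spans ℂ[x, y, z]. -/

import Mathlib

open MvPolynomial

/-- The dual canonical basis family of `ℂ[N] = ℂ[x, y, z]` for `G = SL₃` :
the polynomials `x^a z^b (xy − z)^c` together with the polynomials
`y^{a+1} z^b (xy − z)^c`, indexed by the disjoint union `ℕ³ ⊔ ℕ³`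
(here `x = X 0`, `y = X 1`, `z = X 2`). -/
noncomputable def dualCanonicalFamily :
    (ℕ × ℕ × ℕ) ⊕ (ℕ × ℕ × ℕ) → MvPolynomial (Fin 3) ℂ :=
  Sum.elim
    (fun p => X 0 ^ p.1 * X 2 ^ p.2.1 * (X 0 * X 1 - X 2) ^ p.2.2)
    (fun p => X 1 ^ (p.1 + 1) * X 2 ^ p.2.1 * (X 0 * X 1 - X 2) ^ p.2.2)

namespace DCF
open Finset

abbrev Idx := (ℕ × ℕ × ℕ) ⊕ (ℕ × ℕ × ℕ)

noncomputable def m3 (i j k : ℕ) : Fin 3 →₀ ℕ :=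
  Finsupp.single 0 i + Finsupp.single 1 j + Finsupp.single 2 k

@[simp] lemma m3_apply0 (i j k : ℕ) : m3 i j k 0 = i := by
  simp [m3, Finsupp.single_apply]
@[simp] lemma m3_apply1 (i j k : ℕ) : m3 i j k 1 = j := by
  simp [m3, Finsupp.single_apply]
@[simp] lemma m3_apply2 (i j k : ℕ) : m3 i j k 2 = k := by
  simp [m3, Finsupp.single_apply]

lemma m3_inj {i j k i' j' k' : ℕ} (h : m3 i j k = m3 i' j' k') :
    i = i' ∧ j = j' ∧ k = k' := by
  refine ⟨?_, ?_, ?_⟩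
  · have := DFunLike.congr_fun h (0 : Fin 3); simpa using this
  · have := DFunLike.congr_fun h (1 : Fin 3); simpa using this
  · have := DFunLike.congr_fun h (2 : Fin 3); simpa using this

lemma monomial_m3 (i j k : ℕ) (a : ℂ) :
    (monomial (m3 i j k) a : MvPolynomial (Fin 3) ℂ)
      = C a * (X 0 ^ i * X 1 ^ j * X 2 ^ k) := by
  rw [X_pow_eq_monomial, X_pow_eq_monomial, X_pow_eq_monomial, monomial_mul, monomial_mul,
    C_mul_monomial, m3]
  norm_num

lemma expand_inl (a b c : ℕ) :
    dualCanonicalFamily (Sum.inl (a, b, c)) =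
      ∑ t ∈ range (c + 1),
        monomial (m3 (a + t) t (b + (c - t))) (((-1) ^ (t + c) * (c.choose t) : ℂ)) := by
  show (X 0 ^ a * X 2 ^ b * (X 0 * X 1 - X 2) ^ c : MvPolynomial (Fin 3) ℂ) = _
  rw [sub_pow, Finset.mul_sum]
  refine Finset.sum_congr rfl fun t ht => ?_
  rw [monomial_m3]
  rw [show (C ((-1) ^ (t + c) * (c.choose t) : ℂ) : MvPolynomial (Fin 3) ℂ)
      = (-1) ^ (t + c) * (c.choose t : MvPolynomial (Fin 3) ℂ) by
    simp [C_mul, C_pow, C_neg]]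
  rw [pow_add (X 0) a t, pow_add (X 2) b (c - t), mul_pow]
  ring

lemma expand_inr (a b c : ℕ) :
    dualCanonicalFamily (Sum.inr (a, b, c)) =
      ∑ t ∈ range (c + 1),
        monomial (m3 t (a + 1 + t) (b + (c - t))) (((-1) ^ (t + c) * (c.choose t) : ℂ)) := by
  show (X 1 ^ (a + 1) * X 2 ^ b * (X 0 * X 1 - X 2) ^ c : MvPolynomial (Fin 3) ℂ) = _
  rw [sub_pow, Finset.mul_sum]
  refine Finset.sum_congr rfl fun t ht => ?_
  rw [monomial_m3]
  rw [show (C ((-1) ^ (t + c) * (c.choose t) : ℂ) : MvPolynomial (Fin 3) ℂ)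
      = (-1) ^ (t + c) * (c.choose t : MvPolynomial (Fin 3) ℂ) by
    simp [C_mul, C_pow, C_neg]]
  rw [pow_add (X 1) (a + 1) t, pow_add (X 2) b (c - t), mul_pow]
  ring

/-- the "weight" of an index: the exponent of `xy − z`. -/
def wt : Idx → ℕ := Sum.elim (fun p => p.2.2) (fun p => p.2.2)

/-- the leading monomial of a family member. -/
noncomputable def lead : Idx → (Fin 3 →₀ ℕ) :=
  Sum.elim (fun p => m3 (p.1 + p.2.2) p.2.2 p.2.1) (fun p => m3 p.2.2 (p.1 + 1 + p.2.2) p.2.1)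

/-- the weight of a monomial. -/
def mwt (d : Fin 3 →₀ ℕ) : ℕ := min (d 0) (d 1)

lemma mwt_lead (idx : Idx) : mwt (lead idx) = wt idx := by
  rcases idx with ⟨a, b, c⟩ | ⟨a, b, c⟩ <;> simp [mwt, lead, wt] <;> omega

lemma lead_inj : Function.Injective lead := by
  rintro (⟨a, b, c⟩ | ⟨a, b, c⟩) (⟨a', b', c'⟩ | ⟨a', b', c'⟩) h <;>
    simp only [lead, Sum.elim_inl, Sum.elim_inr] at h <;>
    obtain ⟨h1, h2, h3⟩ := m3_inj h
  · simp only [Sum.inl.injEq, Prod.mk.injEq]; omega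
  · exfalso; omega
  · exfalso; omega
  · simp only [Sum.inr.injEq, Prod.mk.injEq]; omega

lemma coeff_lead_self (idx : Idx) :
    coeff (lead idx) (dualCanonicalFamily idx) = 1 := by
  rcases idx with ⟨a, b, c⟩ | ⟨a, b, c⟩
  · rw [expand_inl, coeff_sum]
    rw [Finset.sum_eq_single c]
    · rw [coeff_monomial, if_pos (by simp [lead])]
      simp [← two_mul, pow_mul]
    · intro t ht hne
      rw [coeff_monomial, if_neg]
      intro hm
      obtain ⟨-, h2, -⟩ := m3_inj hm
      simp only [lead, Sum.elim_inl] at h2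
      exact hne (by omega)
    · intro h; exact absurd (self_mem_range_succ c) h
  · rw [expand_inr, coeff_sum]
    rw [Finset.sum_eq_single c]
    · rw [coeff_monomial, if_pos (by simp [lead])]
      simp [← two_mul, pow_mul]
    · intro t ht hne
      rw [coeff_monomial, if_neg]
      intro hm
      obtain ⟨h1, -, -⟩ := m3_inj hm
      simp only [lead, Sum.elim_inr] at h1
      exact hne (by omega)
    · intro h; exact absurd (self_mem_range_succ c) h

lemma coeff_bound {idx : Idx} {d : Fin 3 →₀ ℕ}
    (h : coeff d (dualCanonicalFamily idx) ≠ 0) :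
    mwt d ≤ wt idx ∧ (mwt d = wt idx → d = lead idx) := by
  rcases idx with ⟨a, b, c⟩ | ⟨a, b, c⟩
  · rw [expand_inl, coeff_sum] at h
    obtain ⟨t, ht, hne⟩ := Finset.exists_ne_zero_of_sum_ne_zero h
    rw [coeff_monomial] at hne
    have hd : m3 (a + t) t (b + (c - t)) = d := by
      by_contra hc; rw [if_neg hc] at hne; exact hne rfl
    rw [mem_range] at ht
    have hmwt : mwt d = t := by rw [← hd]; simp only [mwt, m3_apply0, m3_apply1]; omega
    constructor
    · simp only [wt, Sum.elim_inl]; omega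
    · intro he
      simp only [wt, Sum.elim_inl] at he
      have htc : t = c := by omega
      rw [← hd, lead]
      simp only [Sum.elim_inl]
      subst htc
      congr 1 <;> omega
  · rw [expand_inr, coeff_sum] at h
    obtain ⟨t, ht, hne⟩ := Finset.exists_ne_zero_of_sum_ne_zero h
    rw [coeff_monomial] at hne
    have hd : m3 t (a + 1 + t) (b + (c - t)) = d := by
      by_contra hc; rw [if_neg hc] at hne; exact hne rfl
    rw [mem_range] at ht
    have hmwt : mwt d = t := by rw [← hd]; simp only [mwt, m3_apply0, m3_apply1]; omega
    constructor
    · simp only [wt, Sum.elim_inr]; omega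
    · intro he
      simp only [wt, Sum.elim_inr] at he
      have htc : t = c := by omega
      rw [← hd, lead]
      simp only [Sum.elim_inr]
      subst htc
      congr 1 <;> omega

/-- if `j ≠ i` and `wt j ≤ wt i`, `f j` has no `lead i` monomial. -/
lemma coeff_lead_other {i j : Idx} (hne : j ≠ i) (hle : wt j ≤ wt i) :
    coeff (lead i) (dualCanonicalFamily j) = 0 := by
  by_contra h
  obtain ⟨h1, h2⟩ := coeff_bound h
  rw [mwt_lead] at h1 h2
  have : wt i = wt j := le_antisymm h1 hle
  exact hne (lead_inj (h2 this)).symm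

lemma indep_aux : ∀ (n : ℕ) (s : Finset Idx) (g : Idx → ℂ), s.card ≤ n →
    (∑ i ∈ s, g i • dualCanonicalFamily i) = 0 → ∀ i ∈ s, g i = 0 := by
  intro n
  induction n with
  | zero =>
    intro s g hcard _ i hi
    rw [Nat.le_zero, Finset.card_eq_zero] at hcard
    subst hcard; exact absurd hi (Finset.notMem_empty i)
  | succ n ih =>
    intro s g hcard hsum i hi
    set M := s.sup wt with hM
    have hmax : ∀ j ∈ s, wt j = M → g j = 0 := by
      intro j hj hwj
      have h0 := congrArg (coeff (lead j)) hsum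
      rw [coeff_sum] at h0
      simp only [coeff_smul, coeff_zero] at h0
      rw [Finset.sum_eq_single j] at h0
      · rw [coeff_lead_self, smul_eq_mul, mul_one] at h0; exact h0
      · intro k hk hkj
        rw [coeff_lead_other hkj (by rw [hwj]; exact Finset.le_sup hk), smul_zero]
      · intro hj'; exact absurd hj hj'
    by_cases hMi : wt i = M
    · exact hmax i hi hMi
    · have hne : s.Nonempty := ⟨i, hi⟩
      obtain ⟨j0, hj0, hj0M⟩ := Finset.exists_mem_eq_sup s hne wt
      set s' := s.filter (fun j => ¬ wt j = M) with hs'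
      have hcard' : s'.card ≤ n := by
        have hss : s' ⊂ s := by
          refine Finset.filter_ssubset.mpr ⟨j0, hj0, ?_⟩
          simp [hj0M.symm]; exact hM.symm
        have := Finset.card_lt_card hss
        omega
      have hsum' : (∑ j ∈ s', g j • dualCanonicalFamily j) = 0 := by
        have hsplit := Finset.sum_filter_add_sum_filter_not s (fun j => wt j = M)
          (fun j => g j • dualCanonicalFamily j)
        have hzero : (∑ j ∈ s.filter (fun j => wt j = M), g j • dualCanonicalFamily j) = 0 := by
          refine Finset.sum_eq_zero fun j hj => ?_
          rw [Finset.mem_filter] at hj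
          rw [hmax j hj.1 hj.2, zero_smul]
        rw [← hsum, ← hsplit, hzero, zero_add]
      exact ih s' g hcard' hsum' i (Finset.mem_filter.mpr ⟨hi, hMi⟩)

theorem indep : LinearIndependent ℂ dualCanonicalFamily := by
  rw [linearIndependent_iff']
  intro s g hs i hi
  exact indep_aux s.card s g le_rfl hs i hi

theorem spans : Submodule.span ℂ (Set.range dualCanonicalFamily) = ⊤ := by
  set S := Submodule.span ℂ (Set.range dualCanonicalFamily) with hS
  have hmem : ∀ idx : Idx, dualCanonicalFamily idx ∈ S := fun idx =>
    Submodule.subset_span ⟨idx, rfl⟩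
  have hgen : ∀ (idx : Idx) (n : Fin 3), dualCanonicalFamily idx * X n ∈ S := by
    rintro (⟨a, b, c⟩ | ⟨a, b, c⟩) n <;> fin_cases n
    · -- inl * X 0
      have h : dualCanonicalFamily (Sum.inl (a, b, c)) * X 0
          = dualCanonicalFamily (Sum.inl (a + 1, b, c)) := by
        simp only [dualCanonicalFamily, Sum.elim_inl]; ring
      have hm := hmem (Sum.inl (a + 1, b, c)); rw [← h] at hm; exact hm
    · -- inl * X 1
      rcases a with _ | a'
      · have h : dualCanonicalFamily (Sum.inl (0, b, c)) * X 1
            = dualCanonicalFamily (Sum.inr (0, b, c)) := by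
          simp only [dualCanonicalFamily, Sum.elim_inl, Sum.elim_inr]; ring
        have hm := hmem (Sum.inr (0, b, c)); rw [← h] at hm; exact hm
      · have h : dualCanonicalFamily (Sum.inl (a' + 1, b, c)) * X 1
            = dualCanonicalFamily (Sum.inl (a', b, c + 1))
              + dualCanonicalFamily (Sum.inl (a', b + 1, c)) := by
          simp only [dualCanonicalFamily, Sum.elim_inl]; ring
        have hm := add_mem (hmem (Sum.inl (a', b, c + 1))) (hmem (Sum.inl (a', b + 1, c))); rw [← h] at hm; exact hm
    · -- inl * X 2
      have h : dualCanonicalFamily (Sum.inl (a, b, c)) * X 2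
          = dualCanonicalFamily (Sum.inl (a, b + 1, c)) := by
        simp only [dualCanonicalFamily, Sum.elim_inl]; ring
      have hm := hmem (Sum.inl (a, b + 1, c)); rw [← h] at hm; exact hm
    · -- inr * X 0
      rcases a with _ | a'
      · have h : dualCanonicalFamily (Sum.inr (0, b, c)) * X 0
            = dualCanonicalFamily (Sum.inl (0, b, c + 1))
              + dualCanonicalFamily (Sum.inl (0, b + 1, c)) := by
          simp only [dualCanonicalFamily, Sum.elim_inl, Sum.elim_inr]; ring
        have hm := add_mem (hmem (Sum.inl (0, b, c + 1))) (hmem (Sum.inl (0, b + 1, c))); rw [← h] at hm; exact hm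
      · have h : dualCanonicalFamily (Sum.inr (a' + 1, b, c)) * X 0
            = dualCanonicalFamily (Sum.inr (a', b, c + 1))
              + dualCanonicalFamily (Sum.inr (a', b + 1, c)) := by
          simp only [dualCanonicalFamily, Sum.elim_inr]; ring
        have hm := add_mem (hmem (Sum.inr (a', b, c + 1))) (hmem (Sum.inr (a', b + 1, c))); rw [← h] at hm; exact hm
    · -- inr * X 1
      have h : dualCanonicalFamily (Sum.inr (a, b, c)) * X 1
          = dualCanonicalFamily (Sum.inr (a + 1, b, c)) := by
        simp only [dualCanonicalFamily, Sum.elim_inr]; ring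
      have hm := hmem (Sum.inr (a + 1, b, c)); rw [← h] at hm; exact hm
    · -- inr * X 2
      have h : dualCanonicalFamily (Sum.inr (a, b, c)) * X 2
          = dualCanonicalFamily (Sum.inr (a, b + 1, c)) := by
        simp only [dualCanonicalFamily, Sum.elim_inr]; ring
      have hm := hmem (Sum.inr (a, b + 1, c)); rw [← h] at hm; exact hm
  have hone : (1 : MvPolynomial (Fin 3) ℂ) ∈ S := by
    have : dualCanonicalFamily (Sum.inl (0, 0, 0)) = 1 := by
      simp [dualCanonicalFamily]
    rw [← this]; exact hmem _
  have hclosed : ∀ p ∈ S, ∀ n : Fin 3, p * X n ∈ S := by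
    intro p hp n
    induction hp using Submodule.span_induction with
    | mem q hq => obtain ⟨idx, rfl⟩ := hq; exact hgen idx n
    | zero => rw [zero_mul]; exact S.zero_mem
    | add q r _ _ hq hr => rw [add_mul]; exact add_mem hq hr
    | smul c q _ hq => rw [smul_mul_assoc]; exact S.smul_mem c hq
  rw [eq_top_iff]
  rintro p -
  induction p using MvPolynomial.induction_on with
  | C a =>
    have : (C a : MvPolynomial (Fin 3) ℂ) = a • 1 := by
      rw [smul_eq_C_mul, mul_one]
    rw [this]; exact S.smul_mem a hone
  | add p q hp hq => exact add_mem hp hq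
  | mul_X p n hp => exact hclosed p hp n

end DCF


/-- The family `{x^a z^b (xy−z)^c} ∪ {y^{a+1} z^b (xy−z)^c}` is a basis of `ℂ[x,y,z]`
as a `ℂ`-vector space: it is linearly independent and spans. -/
theorem dualCanonicalFamily_isBasis :
    LinearIndependent ℂ dualCanonicalFamily ∧
      Submodule.span ℂ (Set.range dualCanonicalFamily) = ⊤ := by
  exact ⟨DCF.indep, DCF.spans⟩
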